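/- (Telescoping bound in the convergence proof) Under the assumptions of the proximal gradient convergence theorem, each step satisfies ξ(x^i) − ξ(x*) ≤ (1/2η)(‖x^{i−1} − x*‖² − ‖x^i − x*‖²), and summing over i = 1,…,t gives Σᵢ (ξ(x^i) − ξ(x*)) ≤ ‖x⁰ − x*‖²/(2η). -/

import Mathlib

open RealInnerProductSpace

variable {n : ℕ}

/-- The convex subdifferential of `g` at `x`. -/
def subdiff (g : EuclideanSpace ℝ (Fin n) → ℝ) (x : EuclideanSpace ℝ (Fin n)) :
    Set (EuclideanSpace ℝ (Fin n)) :=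
  {v | ∀ y, g x + ⟪v, y - x⟫ ≤ g y}

/-- `z` is the value of the proximal operator `prox_{ηg}` at `v`, i.e. `z` minimizes
`x ↦ g x + (1/(2η))‖x − v‖²`. -/
def IsProx (g : EuclideanSpace ℝ (Fin n) → ℝ) (η : ℝ)
    (v z : EuclideanSpace ℝ (Fin n)) : Prop :=
  ∀ x, g z + 1 / (2 * η) * ‖z - v‖ ^ 2 ≤ g x + 1 / (2 * η) * ‖x - v‖ ^ 2

open scoped Classical in
/-- The proximal operator `prox_{ηg}` (defined via choice of a minimizer). -/
noncomputable def prox (g : EuclideanSpace ℝ (Fin n) → ℝ) (η : ℝ)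
    (v : EuclideanSpace ℝ (Fin n)) : EuclideanSpace ℝ (Fin n) :=
  if h : ∃ z, IsProx g η v z then h.choose else 0

private lemma small_coeff {A B : ℝ}
    (h : ∀ t : ℝ, 0 < t → t ≤ 1 → 0 ≤ t * A + t ^ 2 * B) : 0 ≤ A := by
  by_contra hA
  push_neg at hA
  set t := min 1 (-A / (2 * (|B| + 1))) with ht
  have htpos : 0 < t := lt_min one_pos (div_pos (neg_pos.2 hA) (by positivity))
  have ht1 : t ≤ 1 := min_le_left _ _
  have ht2 : t ≤ -A / (2 * (|B| + 1)) := min_le_right _ _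
  have ht3 : t * (2 * (|B| + 1)) ≤ -A := (le_div_iff₀ (by positivity)).1 ht2
  have hB : B ≤ |B| := le_abs_self B
  have hh := h t htpos ht1
  nlinarith [abs_nonneg B, mul_le_mul_of_nonneg_left ht3 htpos.le,
    mul_le_mul_of_nonneg_left hB (sq_nonneg t), sq_nonneg t]

private lemma line_hasDerivAt {f : EuclideanSpace ℝ (Fin n) → ℝ}
    (hfd : Differentiable ℝ f) (x d : EuclideanSpace ℝ (Fin n)) (t : ℝ) :
    HasDerivAt (fun s : ℝ => f (x + s • d)) ⟪gradient f (x + t • d), d⟫ t := by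
  have hc : HasDerivAt (fun s : ℝ => x + s • d) d t := by
    simpa using ((hasDerivAt_id t).smul_const d).const_add x
  have hF := ((hfd (x + t • d)).hasGradientAt.hasFDerivAt).comp_hasDerivAt t hc
  exact hF.congr_deriv (by rw [InnerProductSpace.toDual_apply_apply])

private lemma descent_lemma {f : EuclideanSpace ℝ (Fin n) → ℝ}
    (hfd : Differentiable ℝ f) {Cf : ℝ} (hCf : 0 ≤ Cf)
    (hlip : ∀ x y, ‖gradient f x - gradient f y‖ ≤ Cf * ‖x - y‖)
    (x y : EuclideanSpace ℝ (Fin n)) :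
    f y ≤ f x + ⟪gradient f x, y - x⟫ + Cf / 2 * ‖y - x‖ ^ 2 := by
  set d := y - x with hd
  set ψ : ℝ → ℝ := fun s => f (x + s • d) - ⟪gradient f x, d⟫ * s - Cf / 2 * ‖d‖ ^ 2 * s ^ 2
    with hψ
  have hderiv : ∀ s : ℝ, HasDerivAt ψ
      (⟪gradient f (x + s • d), d⟫ - ⟪gradient f x, d⟫ - Cf * ‖d‖ ^ 2 * s) s := by
    intro s
    have h1 := line_hasDerivAt hfd x d s
    have h2 : HasDerivAt (fun s : ℝ => ⟪gradient f x, d⟫ * s) ⟪gradient f x, d⟫ s := by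
      simpa using (hasDerivAt_id s).const_mul ⟪gradient f x, d⟫
    have h3 : HasDerivAt (fun s : ℝ => Cf / 2 * ‖d‖ ^ 2 * s ^ 2) (Cf * ‖d‖ ^ 2 * s) s := by
      have := (hasDerivAt_pow 2 s).const_mul (Cf / 2 * ‖d‖ ^ 2)
      exact this.congr_deriv (by norm_num; ring)
    exact (h1.sub h2).sub h3
  have hmono : ψ 1 ≤ ψ 0 := by
    have hanti := antitoneOn_of_deriv_nonpos (convex_Icc (0:ℝ) 1)
      (fun s _ => (hderiv s).continuousAt.continuousWithinAt)
      (fun s hs => (hderiv s).differentiableAt.differentiableWithinAt)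
      (fun s hs => by
        rw [interior_Icc] at hs
        rw [(hderiv s).deriv]
        have hcs := real_inner_le_norm (gradient f (x + s • d) - gradient f x) d
        have hl := hlip (x + s • d) x
        have hnorm : ‖x + s • d - x‖ = s * ‖d‖ := by
          simp [norm_smul, abs_of_pos hs.1]
        rw [hnorm] at hl
        rw [inner_sub_left] at hcs
        nlinarith [norm_nonneg d, norm_nonneg (gradient f (x + s • d) - gradient f x),
          mul_le_mul_of_nonneg_right hl (norm_nonneg d)])
    have := hanti (Set.left_mem_Icc.2 zero_le_one) (Set.right_mem_Icc.2 zero_le_one) zero_le_one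
    exact this
  have hψ0 : ψ 0 = f x := by simp [hψ]
  have hψ1 : ψ 1 = f y - ⟪gradient f x, d⟫ - Cf / 2 * ‖d‖ ^ 2 := by
    simp [hψ, hd]
  rw [hψ0, hψ1] at hmono
  linarith

private lemma grad_ineq {f : EuclideanSpace ℝ (Fin n) → ℝ}
    (hf : ConvexOn ℝ Set.univ f) (hfd : Differentiable ℝ f) {Cf : ℝ} (hCf : 0 ≤ Cf)
    (hlip : ∀ x y, ‖gradient f x - gradient f y‖ ≤ Cf * ‖x - y‖)
    (x y : EuclideanSpace ℝ (Fin n)) :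
    f x + ⟪gradient f x, y - x⟫ ≤ f y := by
  set d := y - x with hd
  have key : 0 ≤ f y - f x - ⟪gradient f x, d⟫ := by
    apply small_coeff (B := 2 * Cf * ‖d‖ ^ 2)
    intro t ht0 ht1
    have hcomb : x + t • d = (1 - t) • x + t • y := by
      rw [hd, sub_smul, one_smul, smul_sub]; abel
    have hconv := hf.2 (Set.mem_univ x) (Set.mem_univ y) (by linarith : (0:ℝ) ≤ 1 - t)
      ht0.le (by ring)
    rw [← hcomb] at hconv
    have hdes := descent_lemma hfd hCf hlip (x + t • d) x
    have hxx : x - (x + t • d) = -(t • d) := by abel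
    rw [hxx, inner_neg_right, real_inner_smul_right, norm_neg, norm_smul,
      Real.norm_eq_abs, abs_of_pos ht0] at hdes
    simp only [smul_eq_mul] at hconv
    have hcs := real_inner_le_norm (gradient f x - gradient f (x + t • d)) d
    have hl := hlip x (x + t • d)
    have hnorm : ‖x - (x + t • d)‖ = t * ‖d‖ := by
      simp [norm_smul, abs_of_pos ht0]
    rw [hnorm] at hl
    rw [inner_sub_left] at hcs
    have hA : ⟪gradient f x, d⟫ - ⟪gradient f (x + t • d), d⟫ ≤ Cf * (t * ‖d‖) * ‖d‖ :=
      hcs.trans (mul_le_mul_of_nonneg_right hl (norm_nonneg d))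
    have hA' := mul_le_mul_of_nonneg_left hA ht0.le
    have hq : 0 ≤ t ^ 2 * (Cf * ‖d‖ ^ 2) := by positivity
    linarith [hdes, hconv, hA', hq]
  linarith

private lemma isProx_subgrad {g : EuclideanSpace ℝ (Fin n) → ℝ}
    (hg : ConvexOn ℝ Set.univ g) {η : ℝ} (hη : 0 < η)
    {v z : EuclideanSpace ℝ (Fin n)} (hz : IsProx g η v z)
    (y : EuclideanSpace ℝ (Fin n)) :
    g z + 1 / η * ⟪v - z, y - z⟫ ≤ g y := by
  set d := y - z with hd
  have key : 0 ≤ η * (g y - g z) - ⟪v - z, d⟫ := by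
    apply small_coeff (B := ‖d‖ ^ 2 / 2)
    intro t ht0 ht1
    have hcomb : z + t • d = (1 - t) • z + t • y := by
      rw [hd, sub_smul, one_smul, smul_sub]; abel
    have hconv := hg.2 (Set.mem_univ z) (Set.mem_univ y) (by linarith : (0:ℝ) ≤ 1 - t)
      ht0.le (by ring)
    rw [← hcomb] at hconv
    have hzz := hz (z + t • d)
    have hnorm : ‖z + t • d - v‖ ^ 2 = ‖z - v‖ ^ 2 - 2 * (t * ⟪v - z, d⟫) + t ^ 2 * ‖d‖ ^ 2 := by
      have h1 : z + t • d - v = -(v - z) + t • d := by abel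
      rw [h1, @norm_add_sq_real, inner_neg_left, real_inner_smul_right, norm_neg,
        norm_smul, Real.norm_eq_abs, abs_of_pos ht0, norm_sub_rev v z]
      ring
    rw [hnorm] at hzz
    -- scale hzz by 2η
    have hscale := mul_le_mul_of_nonneg_left hzz (by positivity : (0:ℝ) ≤ 2 * η)
    have he1 : 2 * η * (g z + 1 / (2 * η) * ‖z - v‖ ^ 2) = 2 * η * g z + ‖z - v‖ ^ 2 := by
      field_simp
    have he2 : 2 * η * (g (z + t • d) + 1 / (2 * η) *
        (‖z - v‖ ^ 2 - 2 * (t * ⟪v - z, d⟫) + t ^ 2 * ‖d‖ ^ 2)) =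
        2 * η * g (z + t • d) + (‖z - v‖ ^ 2 - 2 * (t * ⟪v - z, d⟫) + t ^ 2 * ‖d‖ ^ 2) := by
      field_simp
    rw [he1, he2] at hscale
    simp only [smul_eq_mul] at hconv
    have hconv' := mul_le_mul_of_nonneg_left hconv (by positivity : (0:ℝ) ≤ 2 * η)
    linarith [hscale, hconv']
  have h1 : ⟪v - z, y - z⟫ ≤ η * (g y - g z) := by rw [← hd]; linarith
  have h2 : 1 / η * ⟪v - z, y - z⟫ ≤ g y - g z := by
    rw [one_div, inv_mul_le_iff₀ hη]
    linarith [h1]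
  linarith

private lemma exists_isProx {g : EuclideanSpace ℝ (Fin n) → ℝ} (hgc : Continuous g)
    {η : ℝ} (hη : 0 < η) (v : EuclideanSpace ℝ (Fin n)) (M b : ℝ) (hM : 0 ≤ M)
    (hlb : ∀ y, b - M * ‖y - v‖ ≤ g y) : ∃ z, IsProx g η v z := by
  set h : EuclideanSpace ℝ (Fin n) → ℝ := fun y => g y + 1 / (2 * η) * ‖y - v‖ ^ 2 with hh
  have hcont : Continuous h :=
    hgc.add (continuous_const.mul ((continuous_id.sub continuous_const).norm.pow 2))
  have hK : (0:ℝ) ≤ max (g v - b) 0 := le_max_right _ _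
  set K := max (g v - b) 0 with hKdef
  set R := 1 + 2 * η * M + 2 * η * K with hR
  have hR0 : 0 < R := by positivity
  obtain ⟨z, hzmem, hzmin⟩ := (isCompact_closedBall v R).exists_isMinOn
    ⟨v, Metric.mem_closedBall_self hR0.le⟩ hcont.continuousOn
  refine ⟨z, fun y => ?_⟩
  by_cases hy : y ∈ Metric.closedBall v R
  · have := isMinOn_iff.1 hzmin y hy
    simpa [hh] using this
  · have hyR : R < ‖y - v‖ := by
      simpa [Metric.mem_closedBall, dist_eq_norm, not_le] using hy
    have h1 : g z + 1 / (2 * η) * ‖z - v‖ ^ 2 ≤ g v := by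
      have := isMinOn_iff.1 hzmin v (Metric.mem_closedBall_self hR0.le)
      simpa [hh] using this
    have hKη : (0:ℝ) ≤ 2 * η * K := by nlinarith [hK, hη.le]
    have hMη : (0:ℝ) ≤ 2 * η * M := by nlinarith [hM, hη.le]
    have hs1 : 1 < ‖y - v‖ := by linarith
    have h4 : 2 * η * (M * ‖y - v‖ + K) < ‖y - v‖ ^ 2 := by
      nlinarith [mul_lt_mul_of_pos_right hyR (by linarith : (0:ℝ) < ‖y - v‖),
        mul_le_mul_of_nonneg_left hs1.le hKη, hMη, hs1]
    have h5 : M * ‖y - v‖ + K < 1 / (2 * η) * ‖y - v‖ ^ 2 := by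
      rw [one_div, inv_mul_eq_div, lt_div_iff₀ (by positivity : (0:ℝ) < 2 * η)]
      linarith
    have h6 : g v - b ≤ K := le_max_left _ _
    have h7 := hlb y
    linarith

/-- Telescoping bound in the proximal gradient convergence proof. -/
theorem prox_grad_telescoping_bound (f g : EuclideanSpace ℝ (Fin n) → ℝ)
    (hf : ConvexOn ℝ Set.univ f) (hfd : Differentiable ℝ f)
    (hg : ConvexOn ℝ Set.univ g) (Cf : ℝ) (hCf : 0 < Cf)
    (hlip : ∀ x y, ‖gradient f x - gradient f y‖ ≤ Cf * ‖x - y‖)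
    (η : ℝ) (hη : 0 < η) (hη' : η ≤ 1 / Cf)
    (xstar : EuclideanSpace ℝ (Fin n)) (hmin : ∀ y, f xstar + g xstar ≤ f y + g y)
    (x : ℕ → EuclideanSpace ℝ (Fin n))
    (hiter : ∀ t : ℕ, x (t + 1) = prox g η (x t - η • gradient f (x t))) :
    (∀ i : ℕ, 1 ≤ i →
        f (x i) + g (x i) - (f xstar + g xstar) ≤
          1 / (2 * η) * (‖x (i - 1) - xstar‖ ^ 2 - ‖x i - xstar‖ ^ 2)) ∧
      ∀ t : ℕ, ∑ i ∈ Finset.Icc 1 t, (f (x i) + g (x i) - (f xstar + g xstar)) ≤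
        ‖x 0 - xstar‖ ^ 2 / (2 * η) := by
  have hCf0 : (0:ℝ) ≤ Cf := hCf.le
  have hηC : Cf * η ≤ 1 := by
    have := (le_div_iff₀ hCf).1 hη'
    linarith
  have hgc : Continuous g := by
    rw [← continuousOn_univ]
    exact hg.continuousOn isOpen_univ
  -- linear lower bound for g at xstar
  have hglb : ∀ y, g xstar - ⟪gradient f xstar, y - xstar⟫ ≤ g y := by
    intro y
    set d := y - xstar with hd
    have key : 0 ≤ g y - g xstar + ⟪gradient f xstar, d⟫ := by
      apply small_coeff (B := Cf / 2 * ‖d‖ ^ 2)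
      intro t ht0 ht1
      have hcomb : xstar + t • d = (1 - t) • xstar + t • y := by
        rw [hd, sub_smul, one_smul, smul_sub]; abel
      have hconv := hg.2 (Set.mem_univ xstar) (Set.mem_univ y) (by linarith : (0:ℝ) ≤ 1 - t)
        ht0.le (by ring)
      rw [← hcomb] at hconv
      have hm := hmin (xstar + t • d)
      have hdes := descent_lemma hfd hCf0 hlip xstar (xstar + t • d)
      have hxx : xstar + t • d - xstar = t • d := by abel
      rw [hxx, real_inner_smul_right, norm_smul, Real.norm_eq_abs, abs_of_pos ht0] at hdes
      simp only [smul_eq_mul] at hconv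
      have hq2 : 0 ≤ t ^ 2 * (Cf / 2 * ‖d‖ ^ 2) := by positivity
      linarith [hdes, hconv, hm, hq2]
    linarith
  -- per-step bound
  have key : ∀ t : ℕ,
      f (x (t + 1)) + g (x (t + 1)) - (f xstar + g xstar) ≤
        1 / (2 * η) * (‖x t - xstar‖ ^ 2 - ‖x (t + 1) - xstar‖ ^ 2) := by
    intro t
    have hit := hiter t
    set p := x t with hp
    set u := gradient f p with hu
    set v := p - η • u with hv
    set w := gradient f xstar with hw
    have hlb : ∀ y, (g xstar - ‖w‖ * ‖v - xstar‖) - ‖w‖ * ‖y - v‖ ≤ g y := by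
      intro y
      have h1 := hglb y
      have h2 : ⟪w, y - xstar⟫ ≤ ‖w‖ * ‖y - xstar‖ := real_inner_le_norm _ _
      have h3 : ‖y - xstar‖ ≤ ‖y - v‖ + ‖v - xstar‖ := by
        have : y - xstar = (y - v) + (v - xstar) := by abel
        rw [this]
        exact norm_add_le _ _
      nlinarith [mul_le_mul_of_nonneg_left h3 (norm_nonneg w)]
    obtain ⟨z0, hz0⟩ := exists_isProx hgc hη v ‖w‖ _ (norm_nonneg w) hlb
    have hx1 : IsProx g η v (x (t + 1)) := by
      rw [hit, prox, dif_pos ⟨z0, hz0⟩]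
      exact Exists.choose_spec _
    set q := x (t + 1) with hq
    have hsub := isProx_subgrad hg hη hx1 xstar
    have hdes := descent_lemma hfd hCf0 hlip p q
    have hcvx := grad_ineq hf hfd hCf0 hlip p xstar
    have e1 : ⟪u, q - p⟫ = -⟪u, p - q⟫ := by
      rw [show q - p = -(p - q) by abel, inner_neg_right]
    have e2 : ⟪u, xstar - p⟫ = -⟪u, p - xstar⟫ := by
      rw [show xstar - p = -(p - xstar) by abel, inner_neg_right]
    rw [e1] at hdes
    rw [e2] at hcvx
    have e3 : ⟪v - q, xstar - q⟫ =
        ‖p - q‖ ^ 2 - ⟪p - xstar, p - q⟫ - η * ⟪u, p - q⟫ + η * ⟪u, p - xstar⟫ := by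
      have hvq : v - q = (p - q) - η • u := by rw [hv]; abel
      have hxq : xstar - q = (p - q) - (p - xstar) := by abel
      rw [hvq, hxq, ← real_inner_self_eq_norm_sq]
      simp only [inner_sub_left, inner_sub_right, real_inner_smul_left]
      rw [real_inner_comm p q, real_inner_comm p xstar, real_inner_comm q xstar]
      ring
    have e4 : ‖q - xstar‖ ^ 2 = ‖p - xstar‖ ^ 2 - 2 * ⟪p - xstar, p - q⟫ + ‖p - q‖ ^ 2 := by
      rw [show q - xstar = (p - xstar) - (p - q) by abel, @norm_sub_sq_real]
    have h3a := mul_le_mul_of_nonneg_left hsub hη.le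
    have h3b : η * (g q + 1 / η * ⟪v - q, xstar - q⟫) = η * g q + ⟪v - q, xstar - q⟫ := by
      field_simp
    rw [h3b, e3] at h3a
    rw [norm_sub_rev q p] at hdes
    have H1 := mul_le_mul_of_nonneg_left hdes (by positivity : (0:ℝ) ≤ 2 * η)
    have H2 := mul_le_mul_of_nonneg_left hcvx (by positivity : (0:ℝ) ≤ 2 * η)
    have Hb : Cf * η * ‖p - q‖ ^ 2 ≤ ‖p - q‖ ^ 2 := by
      have := mul_le_mul_of_nonneg_right hηC (sq_nonneg ‖p - q‖)
      linarith
    have goal' : 2 * η * (f q + g q - (f xstar + g xstar)) ≤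
        ‖p - xstar‖ ^ 2 - ‖q - xstar‖ ^ 2 := by
      linarith [H1, H2, h3a, Hb, e4]
    have hfin : f q + g q - (f xstar + g xstar) ≤
        (‖p - xstar‖ ^ 2 - ‖q - xstar‖ ^ 2) / (2 * η) := by
      rw [le_div_iff₀ (by positivity : (0:ℝ) < 2 * η)]
      linarith
    have : (‖p - xstar‖ ^ 2 - ‖q - xstar‖ ^ 2) / (2 * η) =
        1 / (2 * η) * (‖p - xstar‖ ^ 2 - ‖q - xstar‖ ^ 2) := by ring
    linarith [hfin, this.le, this.ge]
  have sumb : ∀ t : ℕ, ∑ i ∈ Finset.Icc 1 t, (f (x i) + g (x i) - (f xstar + g xstar)) ≤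
      1 / (2 * η) * (‖x 0 - xstar‖ ^ 2 - ‖x t - xstar‖ ^ 2) := by
    intro t
    induction t with
    | zero => simp
    | succ t ih =>
      rw [Finset.sum_Icc_succ_top (Nat.le_add_left 1 t)]
      have := key t
      linarith
  refine ⟨?_, ?_⟩
  · intro i hi
    obtain ⟨t, rfl⟩ : ∃ t, i = t + 1 := ⟨i - 1, (Nat.succ_pred_eq_of_pos hi).symm⟩
    simpa using key t
  · intro t
    have h1 := sumb t
    have h2 : 1 / (2 * η) * (‖x 0 - xstar‖ ^ 2 - ‖x t - xstar‖ ^ 2) ≤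
        1 / (2 * η) * ‖x 0 - xstar‖ ^ 2 := by
      apply mul_le_mul_of_nonneg_left _ (by positivity)
      nlinarith [sq_nonneg ‖x t - xstar‖]
    have h3 : 1 / (2 * η) * ‖x 0 - xstar‖ ^ 2 = ‖x 0 - xstar‖ ^ 2 / (2 * η) := by ring
    linarith
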